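/- For any square real matrix A and any norm on ℝ^n, the logarithmic norm μ(A) = lim_{h→0+}(1/h)(‖I+hA‖−1) equals sup_{‖v‖=1} lim_{h→0+}(1/h)(‖v + hAv‖ − 1). That is, the limit and the supremum over the unit sphere can be interchanged. -/

import Mathlib

open Filter Set

section Aux

variable {E : Type*} [NormedAddCommGroup E] [NormedSpace ℝ E]

lemma aux_convex (w u : E) : ConvexOn ℝ Set.univ (fun h : ℝ => ‖w + h • u‖) := by
  have h := (convexOn_univ_norm (E := E)).comp_affineMap (AffineMap.lineMap w (w + u))
  have he : ((AffineMap.lineMap w (w + u) : ℝ →ᵃ[ℝ] E) ⁻¹' Set.univ) = Set.univ := by simp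
  rw [he] at h
  convert h using 2 with x
  case e'_12 => simp [Function.comp, AffineMap.lineMap_apply, add_sub_cancel_left, add_comm]
  all_goals rfl

lemma aux_mono (w u : E) (hw : ‖w‖ = 1) :
    MonotoneOn (fun h : ℝ => (‖w + h • u‖ - 1) / h) (Set.Ioi 0) := by
  intro x hx y hy hxy
  have := (aux_convex w u).secant_mono (a := 0) (x := x) (y := y) (mem_univ _) (mem_univ _)
    (mem_univ _) (ne_of_gt hx) (ne_of_gt hy) hxy
  simpa [hw] using this

lemma aux_bdd (w u : E) (hw : ‖w‖ = 1) (h : ℝ) (hh : h ∈ Set.Ioi (0:ℝ)) :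
    -‖u‖ ≤ (‖w + h • u‖ - 1) / h := by
  have hh' : (0:ℝ) < h := hh
  rw [le_div_iff₀ hh']
  have hge : ‖w‖ - ‖h • u‖ ≤ ‖w + h • u‖ := by
    simpa using norm_sub_norm_le w (-(h • u))
  rw [norm_smul, Real.norm_of_nonneg hh'.le, hw] at hge
  nlinarith

/-- For `‖w‖ = 1`, the right limit of `(‖w + h•u‖ - 1)/h` at `0` exists and equals
the infimum over `h > 0`. -/
lemma aux_tendsto (w u : E) (hw : ‖w‖ = 1) :
    Tendsto (fun h : ℝ => (‖w + h • u‖ - 1) / h) (nhdsWithin 0 (Set.Ioi 0))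
      (nhds (sInf ((fun h : ℝ => (‖w + h • u‖ - 1) / h) '' Set.Ioi 0))) :=
  (aux_mono w u hw).tendsto_nhdsGT
    ⟨-‖u‖, by rintro x ⟨h, hh, rfl⟩; exact aux_bdd w u hw h hh⟩

end Aux

lemma aux_attain {X : Type*} [NormedAddCommGroup X] [NormedSpace ℝ X] [FiniteDimensional ℝ X]
    [Nontrivial X] (T : X →L[ℝ] X) : ∃ v : X, ‖v‖ = 1 ∧ ‖T v‖ = ‖T‖ := by
  have hne : (Metric.sphere (0:X) 1).Nonempty := by
    obtain ⟨x, hx⟩ := exists_norm_eq X (le_of_lt one_pos)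
    exact ⟨x, by simpa [mem_sphere_zero_iff_norm] using hx⟩
  obtain ⟨v, hv, hmax⟩ := (isCompact_sphere (0:X) 1).exists_isMaxOn hne
    ((T.continuous.norm).continuousOn)
  rw [mem_sphere_zero_iff_norm] at hv
  refine ⟨v, hv, le_antisymm (by simpa [hv] using T.le_opNorm v) ?_⟩
  refine T.opNorm_le_bound (norm_nonneg _) fun x => ?_
  rcases eq_or_ne x 0 with rfl | hx
  · simp
  · have hxn : ‖x‖ ≠ 0 := norm_ne_zero_iff.2 hx
    have hy : (‖x‖⁻¹ • x) ∈ Metric.sphere (0:X) 1 := by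
      simp [mem_sphere_zero_iff_norm, norm_smul, inv_mul_cancel₀ hxn]
    have hle : ‖T (‖x‖⁻¹ • x)‖ ≤ ‖T v‖ := hmax hy
    simp only [map_smul, norm_smul, Real.norm_of_nonneg (inv_nonneg.2 (norm_nonneg x))] at hle
    calc ‖T x‖ = ‖x‖ * (‖x‖⁻¹ * ‖T x‖) := by field_simp
    _ ≤ ‖x‖ * ‖T v‖ := mul_le_mul_of_nonneg_left hle (norm_nonneg x)
    _ = ‖T v‖ * ‖x‖ := mul_comm _ _


/-- The logarithmic norm `μ(A) = lim_{h→0⁺}(‖I+hA‖-1)/h` of a linear operator on a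
finite-dimensional real normed space equals the supremum, over unit vectors `v`, of
`lim_{h→0⁺}(‖v+hAv‖-1)/h`: the limit and the supremum over the unit sphere can be
interchanged. -/
theorem logNorm_eq_sup_unit_sphere
    {X : Type*} [NormedAddCommGroup X] [NormedSpace ℝ X] [FiniteDimensional ℝ X] [Nontrivial X]
    (A : X →L[ℝ] X) (μA : ℝ)
    (hμ : Tendsto (fun h : ℝ => (‖ContinuousLinearMap.id ℝ X + h • A‖ - 1) / h)
      (nhdsWithin 0 (Set.Ioi 0)) (nhds μA)) :
    μA = sSup {c : ℝ | ∃ v : X, ‖v‖ = 1 ∧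
      Tendsto (fun h : ℝ => (‖v + h • A v‖ - 1) / h) (nhdsWithin 0 (Set.Ioi 0)) (nhds c)} := by
  set S := {c : ℝ | ∃ v : X, ‖v‖ = 1 ∧
      Tendsto (fun h : ℝ => (‖v + h • A v‖ - 1) / h) (nhdsWithin 0 (Set.Ioi 0)) (nhds c)} with hS
  set f : X → ℝ → ℝ := fun v h => (‖v + h • A v‖ - 1) / h with hfdef
  set g : ℝ → ℝ := fun h => (‖ContinuousLinearMap.id ℝ X + h • A‖ - 1) / h with hgdef
  -- pointwise comparison f v h ≤ g h for unit v, h > 0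
  have hfg : ∀ v : X, ‖v‖ = 1 → ∀ h : ℝ, 0 < h → f v h ≤ g h := by
    intro v hv h hh
    have key : ‖v + h • A v‖ ≤ ‖ContinuousLinearMap.id ℝ X + h • A‖ := by
      have hle := (ContinuousLinearMap.id ℝ X + h • A).le_opNorm v
      simpa [hv] using hle
    exact div_le_div_of_nonneg_right (by linarith) hh.le
  -- every element of S is ≤ μA
  have hub : ∀ c ∈ S, c ≤ μA := by
    rintro c ⟨v, hv, hc⟩
    refine le_of_tendsto_of_tendsto hc hμ ?_
    filter_upwards [eventually_mem_nhdsWithin] with h hh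
    exact hfg v hv h hh
  -- now show μA ∈ S via a compactness argument
  -- sequence h_n → 0⁺
  set u : ℕ → ℝ := fun n => 1 / (n + 1) with hu
  have hu_pos : ∀ n, 0 < u n := fun n => by positivity
  have hu_tendsto' : Tendsto u atTop (nhdsWithin 0 (Set.Ioi 0)) := by
    refine tendsto_nhdsWithin_of_tendsto_nhds_of_eventually_within _
      tendsto_one_div_add_atTop_nhds_zero_nat (Eventually.of_forall fun n => hu_pos n)
  -- choose norm-attaining unit vectors
  have hv_exists : ∀ n : ℕ, ∃ v : X, ‖v‖ = 1 ∧
      ‖(ContinuousLinearMap.id ℝ X + u n • A) v‖ = ‖ContinuousLinearMap.id ℝ X + u n • A‖ :=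
    fun n => aux_attain _
  choose v hv1 hv2 using hv_exists
  -- key: g (u n) = f (v n) (u n)
  have hkey : ∀ n, g (u n) = f (v n) (u n) := by
    intro n
    have happ : (ContinuousLinearMap.id ℝ X + u n • A) (v n) = v n + u n • A (v n) := by
      simp
    simp only [hgdef, hfdef, ← hv2 n, happ]
  -- subsequence converging to v⋆
  have hsphere : ∀ n, v n ∈ Metric.sphere (0:X) 1 := fun n => by
    simpa [mem_sphere_zero_iff_norm] using hv1 n
  obtain ⟨w, hw_mem, φ, hφ, hw_lim⟩ :=
    (isCompact_sphere (0:X) 1).tendsto_subseq hsphere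
  rw [mem_sphere_zero_iff_norm] at hw_mem
  -- the candidate limit for w
  set c : ℝ := sInf (f w '' Set.Ioi 0) with hc
  have hw_tendsto : Tendsto (f w) (nhdsWithin 0 (Set.Ioi 0)) (nhds c) := aux_tendsto w (A w) hw_mem
  -- lower bound: μA ≤ f w t for every t > 0
  have hlow : ∀ t : ℝ, 0 < t → μA ≤ f w t := by
    intro t ht
    have huφ : Tendsto (u ∘ φ) atTop (nhdsWithin 0 (Set.Ioi 0)) :=
      hu_tendsto'.comp hφ.tendsto_atTop
    -- g(u φ n) → μA
    have hgu : Tendsto (fun n => g (u (φ n))) atTop (nhds μA) := hμ.comp huφ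
    -- f (v φ n) t → f w t by continuity in the vector
    have hft : Tendsto (fun n => f (v (φ n)) t) atTop (nhds (f w t)) := by
      have hcont : Continuous fun x : X => (‖x + t • A x‖ - 1) / t := by
        fun_prop
      exact (hcont.tendsto w).comp hw_lim
    refine le_of_tendsto_of_tendsto hgu hft ?_
    have hev : ∀ᶠ n in atTop, u (φ n) ∈ Set.Ioo 0 t :=
      huφ.eventually (Ioo_mem_nhdsGT_of_mem ⟨le_refl 0, ht⟩)
    filter_upwards [hev] with n hn
    calc g (u (φ n)) = f (v (φ n)) (u (φ n)) := hkey (φ n)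
      _ ≤ f (v (φ n)) t := aux_mono _ _ (hv1 (φ n)) hn.1 ht hn.2.le
  -- hence μA ≤ c
  have hμ_le_c : μA ≤ c := by
    refine le_csInf ⟨f w 1, Set.mem_image_of_mem _ (by norm_num)⟩ ?_
    rintro x ⟨t, ht, rfl⟩
    exact hlow t ht
  have hc_mem : c ∈ S := ⟨w, hw_mem, hw_tendsto⟩
  have hc_le : c ≤ μA := hub c hc_mem
  have hceq : c = μA := le_antisymm hc_le hμ_le_c
  have hμ_mem : μA ∈ S := hceq ▸ hc_mem
  exact le_antisymm (le_csSup ⟨μA, hub⟩ hμ_mem) (csSup_le ⟨μA, hμ_mem⟩ hub)
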